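/- arXiv:2101.10690 — 4 statements merged into one kernel-verified Lean document; each statement's English description precedes it below -/
import Mathlib

section
/- Let (A_n)_{n∈N} be operators on a finite-dimensional Hilbert space H with Σ_n A_n* A_n = 1, ρ a density operator on H, and set p_n := Tr(ρ A_n* A_n), ρ₁ := Σ_n A_n ρ A_n*. Then S(ρ) − S(ρ₁) ≤ H(p), where S is von Neumann entropy and H(p) := −Σ_n p_n log p_n is the Shannon entropy of the probability distribution (p_n). -/
open Matrix ComplexOrder

def IsDensity {d : Type*} [Fintype d] (ρ : Matrix d d ℂ) : Prop :=
  ρ.PosSemidef ∧ ρ.trace = 1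

open scoped Classical in
/-- Von Neumann entropy, computed from the eigenvalues of a Hermitian matrix. -/
noncomputable def vNE {d : Type*} [Fintype d] [DecidableEq d] (ρ : Matrix d d ℂ) : ℝ :=
  if h : ρ.IsHermitian then ∑ i, Real.negMulLog (h.eigenvalues i) else 0

section Helpers

lemma dot_self_normSq {d : Type*} [Fintype d] (x : d → ℂ) :
    dotProduct (star x) x = ((∑ a, Complex.normSq (x a) : ℝ) : ℂ) := by
  simp [dotProduct, Complex.normSq_eq_conj_mul_self]

lemma parseval {d : Type*} [Fintype d] [DecidableEq d] (U : Matrix d d ℂ)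
    (hU : U ∈ Matrix.unitaryGroup d ℂ) (w : d → ℂ) :
    ∑ i, Complex.normSq ((star U *ᵥ w) i) = ∑ a, Complex.normSq (w a) := by
  have h : dotProduct (star (star U *ᵥ w)) (star U *ᵥ w)
      = dotProduct (star w) w := by
    rw [star_mulVec, dotProduct_mulVec, vecMul_vecMul]
    have h2 : (star U)ᴴ * star U = 1 := by
      have := Matrix.mem_unitaryGroup_iff.mp hU
      simpa [Matrix.star_eq_conjTranspose] using this
    rw [h2, vecMul_one]
  have h1 := dot_self_normSq (star U *ᵥ w)
  have h2 := dot_self_normSq w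
  rw [h1, h2] at h
  exact_mod_cast h

lemma diag_expand {d : Type*} [Fintype d] [DecidableEq d]
    (C : Matrix d d ℂ) (e : d → ℂ) (x : d → ℂ) :
    dotProduct (star x) ((C * diagonal e * Cᴴ) *ᵥ x)
      = ∑ k, e k * Complex.normSq ((star x ᵥ* C) k) := by
  have hconj : ∀ k, (Cᴴ *ᵥ x) k = star ((star x ᵥ* C) k) := by
    intro k
    simp [Matrix.mulVec, Matrix.vecMul, dotProduct, conjTranspose_apply, mul_comm]
  calc dotProduct (star x) ((C * diagonal e * Cᴴ) *ᵥ x)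
      = dotProduct (star x ᵥ* C) (diagonal e *ᵥ (Cᴴ *ᵥ x)) := by
        rw [← mulVec_mulVec, ← mulVec_mulVec, dotProduct_mulVec]
    _ = ∑ k, (star x ᵥ* C) k * (e k * (Cᴴ *ᵥ x) k) := by
        simp [dotProduct, mulVec_diagonal]
    _ = ∑ k, e k * Complex.normSq ((star x ᵥ* C) k) := by
        refine Finset.sum_congr rfl fun k _ => ?_
        simp [hconj k, mul_left_comm, RCLike.star_def, Complex.mul_conj]

lemma herm_expand {d : Type*} [Fintype d] [DecidableEq d]
    {ρ : Matrix d d ℂ} (hρH : ρ.IsHermitian) (B : Matrix d d ℂ) (x : d → ℂ) :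
    dotProduct (star x) ((B * ρ * Bᴴ) *ᵥ x)
      = ∑ k, (hρH.eigenvalues k : ℂ)
          * Complex.normSq (dotProduct (star x)
              (B *ᵥ (fun a => (hρH.eigenvectorUnitary : Matrix d d ℂ) a k))) := by
  set V : Matrix d d ℂ := (hρH.eigenvectorUnitary : Matrix d d ℂ) with hV
  have hsp : B * ρ * Bᴴ = (B * V) * diagonal (fun k => (hρH.eigenvalues k : ℂ)) * (B * V)ᴴ := by
    rw [conjTranspose_mul]
    calc B * ρ * Bᴴ = B * (V * diagonal (RCLike.ofReal ∘ hρH.eigenvalues) * star V) * Bᴴ := by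
          conv_lhs => rw [hρH.spectral_theorem]
          rw [Unitary.conjStarAlgAut_apply]
      _ = B * V * diagonal (fun k => (hρH.eigenvalues k : ℂ)) * (Vᴴ * Bᴴ) := by
          simp only [Matrix.star_eq_conjTranspose, Function.comp_def, Matrix.mul_assoc]
          rfl
  rw [hsp, diag_expand]
  refine Finset.sum_congr rfl fun k _ => ?_
  congr 1

lemma trace_in_basis {d : Type*} [Fintype d] [DecidableEq d]
    (U : Matrix d d ℂ) (hU : U ∈ Matrix.unitaryGroup d ℂ) (B : Matrix d d ℂ) :
    B.trace = ∑ i, dotProduct (star (fun a => U a i)) (B *ᵥ (fun a => U a i)) := by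
  have h : ∑ i, dotProduct (star (fun a => U a i)) (B *ᵥ (fun a => U a i))
      = (star U * B * U).trace := by
    rw [Matrix.trace]
    refine Finset.sum_congr rfl fun i _ => ?_
    simp [Matrix.mul_apply, dotProduct, Matrix.mulVec, Matrix.diag, Finset.mul_sum,
      Finset.sum_mul, mul_assoc]
    rw [Finset.sum_comm]
  rw [h, Matrix.trace_mul_cycle]
  rw [show U * star U = 1 from Matrix.mem_unitaryGroup_iff.mp hU, one_mul]

lemma jensen_negMulLog {ι : Type*} [Fintype ι] (b lam : ι → ℝ)
    (hb : ∀ k, 0 ≤ b k) (hb1 : ∑ k, b k ≤ 1) (hlam : ∀ k, 0 ≤ lam k) :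
    ∑ k, b k * Real.negMulLog (lam k) ≤ Real.negMulLog (∑ k, b k * lam k) := by
  classical
  set w : Option ι → ℝ := fun o => o.elim (1 - ∑ k, b k) b with hw
  set pt : Option ι → ℝ := fun o => o.elim 0 lam with hpt
  have key := Real.concaveOn_negMulLog.le_map_sum (t := Finset.univ) (w := w) (p := pt)
    (fun o _ => by cases o with
      | none => simpa [hw] using sub_nonneg.mpr hb1
      | some k => exact hb k)
    (by simp [hw, Fintype.sum_option])
    (fun o _ => by cases o with
      | none => exact Set.mem_Ici.mpr le_rfl
      | some k => exact Set.mem_Ici.mpr (hlam k))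
  simpa [hw, hpt, Fintype.sum_option, smul_eq_mul] using key

lemma subadd_term (c P v : ℝ) (hc : 0 ≤ c) (hcp : c ≤ P) (hcv : c ≤ v) :
    Real.negMulLog c ≤ P * v - c - c * Real.log P - c * Real.log v := by
  rcases eq_or_lt_of_le hc with h0 | h0
  · simp only [← h0, Real.negMulLog_zero, mul_zero, zero_mul, sub_zero]
    nlinarith [hcp, hcv]
  · have hP : 0 < P := lt_of_lt_of_le h0 hcp
    have hv : 0 < v := lt_of_lt_of_le h0 hcv
    have ht : 0 < P * v / c := by positivity
    have hlog := Real.log_le_sub_one_of_pos ht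
    have hlogeq : Real.log (P * v / c) = Real.log P + Real.log v - Real.log c := by
      rw [Real.log_div (by positivity) (ne_of_gt h0), Real.log_mul (ne_of_gt hP) (ne_of_gt hv)]
    have := mul_le_mul_of_nonneg_left hlog hc
    rw [hlogeq] at this
    have harith : c * (P * v / c - 1) = P * v - c := by field_simp
    rw [harith] at this
    simp only [Real.negMulLog]
    nlinarith [this]

lemma dot_AA {d : Type*} [Fintype d] (A : Matrix d d ℂ) (z : d → ℂ) :
    dotProduct (star z) ((Aᴴ * A) *ᵥ z)
      = ((∑ a, Complex.normSq ((A *ᵥ z) a) : ℝ) : ℂ) := by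
  rw [← mulVec_mulVec, dotProduct_mulVec, ← star_mulVec, dot_self_normSq]

lemma sum_normSq_mulVec {d N : Type*} [Fintype d] [DecidableEq d] [Fintype N]
    (A : N → Matrix d d ℂ) (hA : ∑ n, (A n)ᴴ * A n = 1) (z : d → ℂ) :
    ∑ m, ∑ a, Complex.normSq ((A m *ᵥ z) a) = ∑ a, Complex.normSq (z a) := by
  have h : ∑ m, dotProduct (star z) (((A m)ᴴ * A m) *ᵥ z)
      = dotProduct (star z) z := by
    have pull : ∀ (B : N → Matrix d d ℂ) (x : d → ℂ), ∑ m, (B m *ᵥ x) = (∑ m, B m) *ᵥ x := by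
      intro B x
      funext a
      simp only [Matrix.mulVec, dotProduct, Finset.sum_apply, Finset.sum_mul,
        Matrix.sum_apply]
      rw [Finset.sum_comm]
    have hmv : ∀ x : d → ℂ, ∑ m, ((A m)ᴴ * A m) *ᵥ x = x := by
      intro x
      rw [pull, hA, one_mulVec]
    calc ∑ m, dotProduct (star z) (((A m)ᴴ * A m) *ᵥ z)
        = dotProduct (star z) (∑ m, ((A m)ᴴ * A m) *ᵥ z) := by
          simp [dotProduct, Finset.mul_sum, Finset.sum_apply]
          rw [Finset.sum_comm]
      _ = dotProduct (star z) z := by rw [hmv]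
  simp only [dot_AA, dot_self_normSq] at h
  exact_mod_cast h

lemma row_bound {d N : Type*} [Fintype d] [DecidableEq d] [Fintype N]
    (A : N → Matrix d d ℂ) (hA : ∑ n, (A n)ᴴ * A n = 1) (n : N) (u : d → ℂ)
    (hu : ∑ a, Complex.normSq (u a) = 1) :
    ∑ a, Complex.normSq (((A n)ᴴ *ᵥ u) a) ≤ 1 := by
  have hs0 : 0 ≤ ∑ a, Complex.normSq (((A n)ᴴ *ᵥ u) a) :=
    Finset.sum_nonneg fun a _ => Complex.normSq_nonneg _
  have ht0 : 0 ≤ ∑ a, Complex.normSq ((A n *ᵥ ((A n)ᴴ *ᵥ u)) a) :=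
    Finset.sum_nonneg fun a _ => Complex.normSq_nonneg _
  have hts : ∑ a, Complex.normSq ((A n *ᵥ ((A n)ᴴ *ᵥ u)) a)
      ≤ ∑ a, Complex.normSq (((A n)ᴴ *ᵥ u) a) := by
    rw [← sum_normSq_mulVec A hA ((A n)ᴴ *ᵥ u)]
    exact Finset.single_le_sum (f := fun m => ∑ a, Complex.normSq ((A m *ᵥ ((A n)ᴴ *ᵥ u)) a))
      (fun m _ => Finset.sum_nonneg fun a _ => Complex.normSq_nonneg _) (Finset.mem_univ n)
  have hsre : ((∑ a, Complex.normSq (((A n)ᴴ *ᵥ u) a) : ℝ) : ℂ)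
      = dotProduct (star u) (A n *ᵥ ((A n)ᴴ *ᵥ u)) := by
    calc ((∑ a, Complex.normSq (((A n)ᴴ *ᵥ u) a) : ℝ) : ℂ)
        = dotProduct (star ((A n)ᴴ *ᵥ u)) ((A n)ᴴ *ᵥ u) :=
          (dot_self_normSq _).symm
      _ = dotProduct (star u ᵥ* A n) ((A n)ᴴ *ᵥ u) := by
          rw [star_mulVec, conjTranspose_conjTranspose]
      _ = dotProduct (star u) (A n *ᵥ ((A n)ᴴ *ᵥ u)) :=
          (dotProduct_mulVec _ _ _).symm
  have hcs : ∑ a, Complex.normSq (((A n)ᴴ *ᵥ u) a)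
      ≤ Real.sqrt (∑ a, Complex.normSq ((A n *ᵥ ((A n)ᴴ *ᵥ u)) a)) := by
    have hinner : (inner ℂ ((WithLp.equiv 2 (d → ℂ)).symm u)
        ((WithLp.equiv 2 (d → ℂ)).symm (A n *ᵥ ((A n)ᴴ *ᵥ u))) : ℂ)
        = dotProduct (star u) (A n *ᵥ ((A n)ᴴ *ᵥ u)) := by
      rw [EuclideanSpace.inner_eq_star_dotProduct, dotProduct_comm]
      rfl
    have hXnorm : ‖(WithLp.equiv 2 (d → ℂ)).symm u‖ = 1 := by
      rw [EuclideanSpace.norm_eq]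
      have hh : ∀ a, ‖(WithLp.equiv 2 (d → ℂ)).symm u a‖ ^ 2 = Complex.normSq (u a) := fun a => by
        rw [Complex.sq_norm]
        rfl
      simp only [hh, hu, Real.sqrt_one]
    have hYnorm : ‖(WithLp.equiv 2 (d → ℂ)).symm (A n *ᵥ ((A n)ᴴ *ᵥ u))‖
        = Real.sqrt (∑ a, Complex.normSq ((A n *ᵥ ((A n)ᴴ *ᵥ u)) a)) := by
      rw [EuclideanSpace.norm_eq]
      congr 1
      refine Finset.sum_congr rfl fun a _ => ?_
      rw [Complex.sq_norm]
      rfl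
    calc ∑ a, Complex.normSq (((A n)ᴴ *ᵥ u) a)
        = (dotProduct (star u) (A n *ᵥ ((A n)ᴴ *ᵥ u))).re := by
          rw [← hsre, Complex.ofReal_re]
      _ ≤ ‖(dotProduct (star u) (A n *ᵥ ((A n)ᴴ *ᵥ u)) : ℂ)‖ := Complex.re_le_norm _
      _ = ‖(inner ℂ ((WithLp.equiv 2 (d → ℂ)).symm u)
            ((WithLp.equiv 2 (d → ℂ)).symm (A n *ᵥ ((A n)ᴴ *ᵥ u))) : ℂ)‖ := by rw [hinner]
      _ ≤ ‖(WithLp.equiv 2 (d → ℂ)).symm u‖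
            * ‖(WithLp.equiv 2 (d → ℂ)).symm (A n *ᵥ ((A n)ᴴ *ᵥ u))‖ := norm_inner_le_norm _ _
      _ = Real.sqrt (∑ a, Complex.normSq ((A n *ᵥ ((A n)ᴴ *ᵥ u)) a)) := by
          rw [hXnorm, hYnorm, one_mul]
  have hfin : ∑ a, Complex.normSq (((A n)ᴴ *ᵥ u) a)
      ≤ Real.sqrt (∑ a, Complex.normSq (((A n)ᴴ *ᵥ u) a)) :=
    le_trans hcs (Real.sqrt_le_sqrt hts)
  nlinarith [Real.sq_sqrt hs0, Real.sqrt_nonneg (∑ a, Complex.normSq (((A n)ᴴ *ᵥ u) a))]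

lemma col_dot {d : Type*} [Fintype d] (U : Matrix d d ℂ) (y : d → ℂ) (i : d) :
    dotProduct (star (fun a => U a i)) y = (star U *ᵥ y) i := by
  simp [Matrix.mulVec, dotProduct, Matrix.star_apply]

lemma unitary_col_normSq {d : Type*} [Fintype d] [DecidableEq d]
    (U : Matrix d d ℂ) (hU : U ∈ Matrix.unitaryGroup d ℂ) (k : d) :
    ∑ a, Complex.normSq (U a k) = 1 := by
  have h := Matrix.mem_unitaryGroup_iff'.mp hU
  have h2 := congrFun (congrFun h k) k
  rw [Matrix.mul_apply, Matrix.one_apply_eq] at h2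
  have h3 : ∑ a, ((Complex.normSq (U a k) : ℝ) : ℂ) = 1 := by
    rw [← h2]
    refine Finset.sum_congr rfl fun a _ => ?_
    rw [Matrix.star_apply, RCLike.star_def, ← Complex.normSq_eq_conj_mul_self]
  exact_mod_cast h3

lemma conj_swap_dot {d : Type*} [Fintype d] (V : Matrix d d ℂ) (w : d → ℂ) (k : d) :
    Complex.normSq (dotProduct (star w) (fun a => V a k))
      = Complex.normSq ((star V *ᵥ w) k) := by
  rw [← Complex.normSq_conj ((star V *ᵥ w) k)]
  congr 1
  simp [Matrix.mulVec, dotProduct, Matrix.star_apply, map_sum, mul_comm]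

lemma dot_sum {d N : Type*} [Fintype d] [Fintype N] (v : d → ℂ) (w : N → d → ℂ) :
    dotProduct v (∑ n, w n) = ∑ n, dotProduct v (w n) := by
  simp only [dotProduct, Finset.sum_apply, Finset.mul_sum]
  rw [Finset.sum_comm]

lemma sum_mulVec' {d N : Type*} [Fintype d] [Fintype N] (B : N → Matrix d d ℂ) (x : d → ℂ) :
    (∑ n, B n) *ᵥ x = ∑ n, (B n *ᵥ x) := by
  funext a
  simp only [Matrix.mulVec, dotProduct, Finset.sum_apply, Finset.sum_mul,
    Matrix.sum_apply]
  rw [Finset.sum_comm]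

end Helpers

/-- Theorem 1 (quantum Szilard principle for pure instruments). -/
theorem szilard_bound_pure_instrument
    {d N : Type*} [Fintype d] [DecidableEq d] [Fintype N]
    (A : N → Matrix d d ℂ)
    (hA : ∑ n, (A n)ᴴ * A n = 1)
    (ρ : Matrix d d ℂ) (hρ : IsDensity ρ)
    (p : N → ℝ) (hp : ∀ n, p n = ((ρ * ((A n)ᴴ * A n)).trace).re)
    (ρ₁ : Matrix d d ℂ) (hρ₁ : ρ₁ = ∑ n, A n * ρ * (A n)ᴴ) :
    vNE ρ - vNE ρ₁ ≤ ∑ n, Real.negMulLog (p n) := by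
  classical
  obtain ⟨hpsd, htr⟩ := hρ
  have hρH : ρ.IsHermitian := hpsd.1
  have hρ₁H : ρ₁.IsHermitian := by
    rw [hρ₁]
    show (∑ n, A n * ρ * (A n)ᴴ)ᴴ = ∑ n, A n * ρ * (A n)ᴴ
    rw [Matrix.conjTranspose_sum]
    exact Finset.sum_congr rfl fun n _ => Matrix.isHermitian_mul_mul_conjTranspose (A n) hρH
  set U : Matrix d d ℂ := (hρ₁H.eigenvectorUnitary : Matrix d d ℂ) with hUdef
  set V : Matrix d d ℂ := (hρH.eigenvectorUnitary : Matrix d d ℂ) with hVdef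
  have hUu : U ∈ Matrix.unitaryGroup d ℂ := (hρ₁H.eigenvectorUnitary).2
  have hVu : V ∈ Matrix.unitaryGroup d ℂ := (hρH.eigenvectorUnitary).2
  set lam : d → ℝ := hρH.eigenvalues with hlamdef
  set nu : d → ℝ := hρ₁H.eigenvalues with hnudef
  set b : N → d → d → ℝ := fun n i k =>
    Complex.normSq (dotProduct (star (fun a => U a i))
      (A n *ᵥ (fun a => V a k))) with hbdef
  set c : N → d → ℝ := fun n i => ∑ k, lam k * b n i k with hcdef
  have hlam0 : ∀ k, 0 ≤ lam k := fun k => hpsd.eigenvalues_nonneg k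
  have hb0 : ∀ n i k, 0 ≤ b n i k := fun n i k => Complex.normSq_nonneg _
  have hc0 : ∀ n i, 0 ≤ c n i := fun n i =>
    Finset.sum_nonneg fun k _ => mul_nonneg (hlam0 k) (hb0 n i k)
  -- c computes the diagonal matrix elements of A_n ρ A_nᴴ in the basis u
  have hc_eq : ∀ n i, dotProduct (star (fun a => U a i))
      ((A n * ρ * (A n)ᴴ) *ᵥ (fun a => U a i)) = ((c n i : ℝ) : ℂ) := by
    intro n i
    rw [herm_expand hρH (A n) (fun a => U a i), hcdef]
    push_cast
    rfl
  have hui : ∀ i, (fun a => U a i) = ⇑(hρ₁H.eigenvectorBasis i) := by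
    intro i
    funext a
    rw [hUdef]
    exact hρ₁H.eigenvectorUnitary_apply a i
  have hnu_eq : ∀ i, nu i = ∑ n, c n i := by
    intro i
    rw [hnudef]
    rw [hρ₁H.eigenvalues_eq i, ← hui i]
    have hsplit : ρ₁ *ᵥ (fun a => U a i) = ∑ n, ((A n * ρ * (A n)ᴴ) *ᵥ (fun a => U a i)) := by
      rw [hρ₁, sum_mulVec']
    rw [hsplit, dot_sum]
    have : (∑ n, dotProduct (star (fun a => U a i))
        ((A n * ρ * (A n)ᴴ) *ᵥ (fun a => U a i))) = ((∑ n, c n i : ℝ) : ℂ) := by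
      push_cast
      exact Finset.sum_congr rfl fun n _ => hc_eq n i
    rw [this]
    simp
  have hp_eq : ∀ n, p n = ∑ i, c n i := by
    intro n
    rw [hp n]
    have h1 : (ρ * ((A n)ᴴ * A n)).trace = (A n * ρ * (A n)ᴴ).trace := by
      rw [Matrix.trace_mul_comm, Matrix.mul_assoc, Matrix.trace_mul_comm]
    rw [h1, trace_in_basis U hUu]
    have : (∑ i, dotProduct (star (fun a => U a i))
        ((A n * ρ * (A n)ᴴ) *ᵥ (fun a => U a i))) = ((∑ i, c n i : ℝ) : ℂ) := by
      push_cast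
      exact Finset.sum_congr rfl fun i _ => hc_eq n i
    rw [this, Complex.ofReal_re]
  have hpsum : ∑ n, p n = 1 := by
    have h1 : ∑ n, (ρ * ((A n)ᴴ * A n)) = ρ := by
      rw [← Finset.mul_sum, hA, mul_one]
    calc ∑ n, p n = ∑ n, ((ρ * ((A n)ᴴ * A n)).trace).re := by
          exact Finset.sum_congr rfl fun n _ => hp n
      _ = ((∑ n, (ρ * ((A n)ᴴ * A n)).trace)).re := (Complex.re_sum _ _).symm
      _ = (ρ.trace).re := by rw [← Matrix.trace_sum, h1]
      _ = 1 := by rw [htr]; simp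
  have hnusum : ∑ i, nu i = 1 := by
    calc ∑ i, nu i = ∑ i, ∑ n, c n i := Finset.sum_congr rfl fun i _ => hnu_eq i
      _ = ∑ n, ∑ i, c n i := Finset.sum_comm
      _ = ∑ n, p n := Finset.sum_congr rfl fun n _ => (hp_eq n).symm
      _ = 1 := hpsum
  have hcol : ∀ k, ∑ n, ∑ i, b n i k = 1 := by
    intro k
    have h1 : ∀ n, ∑ i, b n i k = ∑ a, Complex.normSq ((A n *ᵥ (fun a => V a k)) a) := by
      intro n
      rw [← parseval U hUu (A n *ᵥ (fun a => V a k))]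
      exact Finset.sum_congr rfl fun i _ => by simp only [hbdef]; rw [col_dot]
    simp only [h1]
    rw [sum_normSq_mulVec A hA]
    exact unitary_col_normSq V hVu k
  have hrow : ∀ n i, ∑ k, b n i k ≤ 1 := by
    intro n i
    have h1 : ∀ k, b n i k
        = Complex.normSq ((star V *ᵥ ((A n)ᴴ *ᵥ (fun a => U a i))) k) := by
      intro k
      simp only [hbdef]
      have h2 : dotProduct (star (fun a => U a i)) (A n *ᵥ (fun a => V a k))
          = dotProduct (star ((A n)ᴴ *ᵥ (fun a => U a i))) (fun a => V a k) := by
        rw [dotProduct_mulVec, star_mulVec, conjTranspose_conjTranspose]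
      rw [h2, conj_swap_dot]
    simp only [h1]
    rw [parseval V hVu]
    exact row_bound A hA n (fun a => U a i) (unitary_col_normSq U hUu i)
  have hvρ : vNE ρ = ∑ k, Real.negMulLog (lam k) := by
    unfold vNE
    rw [dif_pos hρH, hlamdef]
  have hvρ₁ : vNE ρ₁ = ∑ i, Real.negMulLog (nu i) := by
    unfold vNE
    rw [dif_pos hρ₁H, hnudef]
  have step1 : ∑ k, Real.negMulLog (lam k) ≤ ∑ n, ∑ i, Real.negMulLog (c n i) := by
    have e1 : ∑ k, Real.negMulLog (lam k)
        = ∑ n, ∑ i, ∑ k, b n i k * Real.negMulLog (lam k) := by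
      calc ∑ k, Real.negMulLog (lam k)
          = ∑ k, (∑ n, ∑ i, b n i k) * Real.negMulLog (lam k) := by
            refine Finset.sum_congr rfl fun k _ => ?_
            rw [hcol k, one_mul]
        _ = ∑ n, ∑ i, ∑ k, b n i k * Real.negMulLog (lam k) := by
            simp only [Finset.sum_mul]
            rw [Finset.sum_comm]
            exact Finset.sum_congr rfl fun n _ => Finset.sum_comm
    rw [e1]
    refine Finset.sum_le_sum fun n _ => Finset.sum_le_sum fun i _ => ?_
    have hj := jensen_negMulLog (fun k => b n i k) lam (hb0 n i) (hrow n i) hlam0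
    have hcc : c n i = ∑ k, b n i k * lam k := by
      rw [hcdef]
      exact Finset.sum_congr rfl fun k _ => mul_comm _ _
    rw [hcc]
    exact hj
  have step2 : ∑ n, ∑ i, Real.negMulLog (c n i)
      ≤ ∑ n, Real.negMulLog (p n) + ∑ i, Real.negMulLog (nu i) := by
    have hcp : ∀ n i, c n i ≤ p n := by
      intro n i
      rw [hp_eq n]
      exact Finset.single_le_sum (fun j _ => hc0 n j) (Finset.mem_univ i)
    have hcν : ∀ n i, c n i ≤ nu i := by
      intro n i
      rw [hnu_eq i]
      exact Finset.single_le_sum (fun m _ => hc0 m i) (Finset.mem_univ n)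
    have hb1 : ∑ n, ∑ i, Real.negMulLog (c n i)
        ≤ ∑ n, ∑ i, (p n * nu i - c n i - c n i * Real.log (p n) - c n i * Real.log (nu i)) :=
      Finset.sum_le_sum fun n _ => Finset.sum_le_sum fun i _ =>
        subadd_term _ _ _ (hc0 n i) (hcp n i) (hcν n i)
    have eA : ∑ n, ∑ i, p n * nu i = (∑ n, p n) * (∑ i, nu i) :=
      (Finset.sum_mul_sum _ _ _ _).symm
    have eB : ∑ n, ∑ i, c n i * Real.log (p n) = ∑ n, (∑ i, c n i) * Real.log (p n) :=
      Finset.sum_congr rfl fun n _ => (Finset.sum_mul _ _ _).symm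
    have eC : ∑ n, ∑ i, c n i * Real.log (nu i) = ∑ i, (∑ n, c n i) * Real.log (nu i) := by
      rw [Finset.sum_comm]
      exact Finset.sum_congr rfl fun i _ => (Finset.sum_mul _ _ _).symm
    have e2 : ∑ n, ∑ i, (p n * nu i - c n i - c n i * Real.log (p n) - c n i * Real.log (nu i))
        = (∑ n, p n) * (∑ i, nu i) - (∑ n, ∑ i, c n i)
          - (∑ n, (∑ i, c n i) * Real.log (p n)) - (∑ i, (∑ n, c n i) * Real.log (nu i)) := by
      simp only [Finset.sum_sub_distrib]
      rw [eA, eB, eC]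
    have e3 : (∑ n, p n) * (∑ i, nu i) = 1 := by rw [hpsum, hnusum, one_mul]
    have e4 : ∑ n, ∑ i, c n i = 1 := by
      rw [show (∑ n, ∑ i, c n i) = ∑ n, p n from
        Finset.sum_congr rfl fun n _ => (hp_eq n).symm, hpsum]
    have e5 : ∑ n, (∑ i, c n i) * Real.log (p n) = -∑ n, Real.negMulLog (p n) := by
      rw [← Finset.sum_neg_distrib]
      refine Finset.sum_congr rfl fun n _ => ?_
      rw [← hp_eq n, Real.negMulLog]
      ring
    have e6 : ∑ i, (∑ n, c n i) * Real.log (nu i) = -∑ i, Real.negMulLog (nu i) := by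
      rw [← Finset.sum_neg_distrib]
      refine Finset.sum_congr rfl fun i _ => ?_
      rw [← hnu_eq i, Real.negMulLog]
      ring
    rw [e2, e3, e4, e5, e6] at hb1
    linarith [hb1]
  rw [hvρ, hvρ₁]
  linarith [step1, step2]
end

section
/- Under the setup of the previous statement, define ρ₁ := Σ_n U_n P_n ρ P_n U_n*, ρ₁' := Σ_n P_n ρ P_n, ρ₂ = ρ₂' := Σ_n p_n |n⟩⟨n|, and the mutual informations I := S(ρ₁)+S(ρ₂)−S(ρ₁₂), I' := S(ρ₁')+S(ρ₂')−S(ρ₁₂'). Then S(ρ) − S(ρ₁) ≤ I' − I. -/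
open Matrix Kronecker ComplexOrder

section Aux

variable {d ι N : Type*} [Fintype d] [DecidableEq d] [Fintype ι] [Fintype N] [DecidableEq N]

/-- Jensen's inequality for `negMulLog` with a substochastic mixing matrix. -/
lemma jensen_negMulLog_s9 (t : d → ι → ℝ) (lam : ι → ℝ) (mu : d → ℝ)
    (ht : ∀ i k, 0 ≤ t i k) (hrow : ∀ i, ∑ k, t i k = 1)
    (hlam : ∀ k, 0 ≤ lam k) (hmu : ∀ i, mu i = ∑ k, t i k * lam k) :
    ∑ k, (∑ i, t i k) * Real.negMulLog (lam k) ≤ ∑ i, Real.negMulLog (mu i) := by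
  have h : ∀ i, ∑ k, t i k * Real.negMulLog (lam k) ≤ Real.negMulLog (mu i) := by
    intro i
    rw [hmu i]
    have := Real.concaveOn_negMulLog.le_map_sum (t := Finset.univ)
      (w := t i) (p := lam) (fun k _ => ht i k) (hrow i) (fun k _ => hlam k)
    simpa using this
  calc ∑ k, (∑ i, t i k) * Real.negMulLog (lam k)
      = ∑ i, ∑ k, t i k * Real.negMulLog (lam k) := by
        rw [Finset.sum_comm]
        exact Finset.sum_congr rfl fun k _ => by rw [Finset.sum_mul]
    _ ≤ ∑ i, Real.negMulLog (mu i) := Finset.sum_le_sum fun i _ => h i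

lemma entry_quad (X : Matrix d d ℂ) (lam : d → ℝ) (i : d) :
    (X * Matrix.diagonal (fun j => (lam j : ℂ)) * Xᴴ) i i
      = ∑ j, ((Complex.normSq (X i j) * lam j : ℝ) : ℂ) := by
  rw [Matrix.mul_apply]
  refine Finset.sum_congr rfl fun j _ => ?_
  rw [Matrix.mul_diagonal, Matrix.conjTranspose_apply]
  push_cast
  rw [Complex.star_def, mul_comm (X i j) ((lam j : ℂ)), mul_assoc, Complex.mul_conj]
  ring

lemma entry_gram (X : Matrix d d ℂ) (i : d) :
    (X * Xᴴ) i i = ∑ j, ((Complex.normSq (X i j) : ℝ) : ℂ) := by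
  rw [Matrix.mul_apply]
  refine Finset.sum_congr rfl fun j _ => ?_
  rw [Matrix.conjTranspose_apply, Complex.star_def, Complex.mul_conj]

lemma entry_gram' (X : Matrix d d ℂ) (j : d) :
    (Xᴴ * X) j j = ∑ i, ((Complex.normSq (X i j) : ℝ) : ℂ) := by
  rw [Matrix.mul_apply]
  refine Finset.sum_congr rfl fun i _ => ?_
  rw [Matrix.conjTranspose_apply, Complex.star_def, mul_comm, Complex.mul_conj]

/-- Entropy does not decrease under a unital (doubly stochastic) quantum channel. -/
lemma vNE_le_channel (A B : Matrix d d ℂ) (hA : A.PosSemidef)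
    (M : ι → Matrix d d ℂ)
    (hMM : ∑ n, M n * (M n)ᴴ = 1) (hMM' : ∑ n, (M n)ᴴ * M n = 1)
    (hB : B = ∑ n, M n * A * (M n)ᴴ) :
    vNE A ≤ vNE B := by
  have hBpsd : B.PosSemidef := by
    rw [hB]
    refine Finset.sum_induction _ _ (fun x y hx hy => hx.add hy) Matrix.PosSemidef.zero ?_
    intro n _
    exact hA.mul_mul_conjTranspose_same (M n)
  have hAh : A.IsHermitian := hA.1
  have hBh : B.IsHermitian := hBpsd.1
  set lam : d → ℝ := hAh.eigenvalues with hlamdef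
  set mu : d → ℝ := hBh.eigenvalues with hmudef
  set W : Matrix d d ℂ := (hAh.eigenvectorUnitary : Matrix d d ℂ) with hWdef
  set V : Matrix d d ℂ := (hBh.eigenvectorUnitary : Matrix d d ℂ) with hVdef
  have hW1 : Wᴴ * W = 1 := by
    simpa [Matrix.star_eq_conjTranspose] using
      Matrix.mem_unitaryGroup_iff'.mp (hAh.eigenvectorUnitary).2
  have hW2 : W * Wᴴ = 1 := by
    simpa [Matrix.star_eq_conjTranspose] using
      Matrix.mem_unitaryGroup_iff.mp (hAh.eigenvectorUnitary).2
  have hV1 : Vᴴ * V = 1 := by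
    simpa [Matrix.star_eq_conjTranspose] using
      Matrix.mem_unitaryGroup_iff'.mp (hBh.eigenvectorUnitary).2
  have hV2 : V * Vᴴ = 1 := by
    simpa [Matrix.star_eq_conjTranspose] using
      Matrix.mem_unitaryGroup_iff.mp (hBh.eigenvectorUnitary).2
  have hAspec : A = W * Matrix.diagonal (fun j => (lam j : ℂ)) * Wᴴ := by
    have := hAh.spectral_theorem
    rw [Unitary.conjStarAlgAut_apply, Matrix.star_eq_conjTranspose] at this
    exact this
  have hBspec : B = V * Matrix.diagonal (fun j => (mu j : ℂ)) * Vᴴ := by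
    have := hBh.spectral_theorem
    rw [Unitary.conjStarAlgAut_apply, Matrix.star_eq_conjTranspose] at this
    exact this
  set C : ι → Matrix d d ℂ := fun n => Vᴴ * M n * W with hCdef
  -- diagonal of mu equals Vᴴ B V
  have hDB : Matrix.diagonal (fun j => (mu j : ℂ)) = Vᴴ * B * V := by
    rw [hBspec]
    calc Matrix.diagonal (fun j => (mu j : ℂ))
        = (Vᴴ * V) * Matrix.diagonal (fun j => (mu j : ℂ)) * (Vᴴ * V) := by
          rw [hV1, Matrix.one_mul, Matrix.mul_one]
      _ = Vᴴ * (V * Matrix.diagonal (fun j => (mu j : ℂ)) * Vᴴ) * V := by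
          simp only [Matrix.mul_assoc]
  -- Vᴴ B V as a sum of C n * D * C nᴴ
  have hVBV : Vᴴ * B * V = ∑ n, C n * Matrix.diagonal (fun j => (lam j : ℂ)) * (C n)ᴴ := by
    rw [hB, Finset.mul_sum, Finset.sum_mul]
    refine Finset.sum_congr rfl fun n _ => ?_
    rw [hAspec]
    simp only [hCdef, Matrix.conjTranspose_mul, Matrix.conjTranspose_conjTranspose,
      Matrix.mul_assoc]
  set t : d → ι × d → ℝ := fun i nj => Complex.normSq ((C nj.1) i nj.2) with htdef
  have ht : ∀ i k, 0 ≤ t i k := fun i k => Complex.normSq_nonneg _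
  -- mu as mixture of lam
  have hmu : ∀ i, mu i = ∑ nj : ι × d, t i nj * lam nj.2 := by
    intro i
    have hentry : ((mu i : ℝ) : ℂ) = ∑ n, ∑ j, ((t i (n, j) * lam j : ℝ) : ℂ) := by
      have h1 : ((mu i : ℝ) : ℂ) = (Vᴴ * B * V) i i := by
        rw [← hDB, Matrix.diagonal_apply_eq]
      rw [h1, hVBV, Matrix.sum_apply]
      refine Finset.sum_congr rfl fun n _ => ?_
      exact entry_quad (C n) lam i
    have := Complex.ofReal_injective (by push_cast at hentry ⊢; exact hentry :
      ((mu i : ℝ) : ℂ) = ((∑ n, ∑ j, t i (n, j) * lam j : ℝ) : ℂ))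
    rw [this, Fintype.sum_prod_type]
  -- rows sum to one
  have hCsum1 : ∑ n, C n * (C n)ᴴ = 1 := by
    have hterm : ∀ n, C n * (C n)ᴴ = Vᴴ * (M n * (M n)ᴴ) * V := by
      intro n
      simp only [hCdef, Matrix.conjTranspose_mul, Matrix.conjTranspose_conjTranspose]
      calc Vᴴ * M n * W * (Wᴴ * ((M n)ᴴ * V))
          = Vᴴ * M n * (W * Wᴴ) * ((M n)ᴴ * V) := by simp only [Matrix.mul_assoc]
        _ = Vᴴ * (M n * (M n)ᴴ) * V := by rw [hW2, Matrix.mul_one]; simp only [Matrix.mul_assoc]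
    calc ∑ n, C n * (C n)ᴴ = Vᴴ * (∑ n, M n * (M n)ᴴ) * V := by
          rw [Finset.mul_sum, Finset.sum_mul]
          exact Finset.sum_congr rfl fun n _ => hterm n
      _ = 1 := by rw [hMM, Matrix.mul_one, hV1]
  have hrow : ∀ i, ∑ nj : ι × d, t i nj = 1 := by
    intro i
    have hentry : ((∑ nj : ι × d, t i nj : ℝ) : ℂ) = ((1 : ℝ) : ℂ) := by
      have h1 : ((1 : Matrix d d ℂ)) i i = 1 := by simp [Matrix.one_apply]
      rw [← hCsum1, Matrix.sum_apply] at h1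
      push_cast
      rw [Fintype.sum_prod_type]
      rw [← h1]
      refine Finset.sum_congr rfl fun n _ => ?_
      rw [entry_gram (C n) i]
    exact_mod_cast hentry
  -- columns sum to one
  have hCsum2 : ∑ n, (C n)ᴴ * C n = 1 := by
    have hterm : ∀ n, (C n)ᴴ * C n = Wᴴ * ((M n)ᴴ * M n) * W := by
      intro n
      simp only [hCdef, Matrix.conjTranspose_mul, Matrix.conjTranspose_conjTranspose]
      calc Wᴴ * ((M n)ᴴ * V) * (Vᴴ * M n * W)
          = Wᴴ * (M n)ᴴ * (V * Vᴴ) * (M n * W) := by simp only [Matrix.mul_assoc]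
        _ = Wᴴ * ((M n)ᴴ * M n) * W := by rw [hV2, Matrix.mul_one]; simp only [Matrix.mul_assoc]
    calc ∑ n, (C n)ᴴ * C n = Wᴴ * (∑ n, (M n)ᴴ * M n) * W := by
          rw [Finset.mul_sum, Finset.sum_mul]
          exact Finset.sum_congr rfl fun n _ => hterm n
      _ = 1 := by rw [hMM', Matrix.mul_one, hW1]
  have hcol : ∀ j, ∑ n, ∑ i, t i (n, j) = 1 := by
    intro j
    have hentry : ((∑ n, ∑ i, t i (n, j) : ℝ) : ℂ) = ((1 : ℝ) : ℂ) := by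
      have h1 : ((1 : Matrix d d ℂ)) j j = 1 := by simp [Matrix.one_apply]
      rw [← hCsum2, Matrix.sum_apply] at h1
      push_cast
      rw [← h1]
      refine Finset.sum_congr rfl fun n _ => ?_
      rw [entry_gram' (C n) j]
    exact_mod_cast hentry
  -- apply Jensen
  have hjensen := jensen_negMulLog_s9 t (fun nj : ι × d => lam nj.2) mu ht hrow
    (fun nj => hA.eigenvalues_nonneg nj.2) hmu
  have hlhs : ∑ nj : ι × d, (∑ i, t i nj) * Real.negMulLog (lam nj.2)
      = ∑ j, Real.negMulLog (lam j) := by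
    rw [Fintype.sum_prod_type, Finset.sum_comm]
    refine Finset.sum_congr rfl fun j _ => ?_
    show ∑ n, (∑ i, t i (n, j)) * Real.negMulLog (lam j) = Real.negMulLog (lam j)
    rw [← Finset.sum_mul, hcol j, one_mul]
  have hvA : vNE A = ∑ j, Real.negMulLog (lam j) := dif_pos hAh
  have hvB : vNE B = ∑ i, Real.negMulLog (mu i) := dif_pos hBh
  rw [hvA, hvB, ← hlhs]
  exact hjensen

lemma stdBasis_conjT (n : N) :
    (Matrix.single n n (1 : ℂ))ᴴ = Matrix.single n n (1 : ℂ) := by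
  ext i j
  simp only [Matrix.conjTranspose_apply, Matrix.single, Matrix.of_apply]
  simp [apply_ite (star : ℂ → ℂ), and_comm]

lemma sum_stdBasis : ∑ n : N, Matrix.single n n (1 : ℂ) = 1 := by
  ext i j
  simp only [Matrix.sum_apply, Matrix.single, Matrix.of_apply, Matrix.one_apply, ite_and]
  rw [Finset.sum_ite_eq' Finset.univ i fun n => if n = j then (1 : ℂ) else 0]
  simp

lemma kron_sum_right {d N ι : Type*} [Fintype d] [Fintype N] [Fintype ι]
    (A : Matrix d d ℂ) (f : ι → Matrix N N ℂ) :
    A ⊗ₖ (∑ n, f n) = ∑ n, A ⊗ₖ f n := by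
  ext ⟨i, a⟩ ⟨j, b⟩
  simp [Matrix.kroneckerMap_apply, Matrix.sum_apply, Finset.mul_sum]

lemma kron_conjT (A : Matrix d d ℂ) (B : Matrix N N ℂ) : (A ⊗ₖ B)ᴴ = Aᴴ ⊗ₖ Bᴴ := by
  ext ⟨i, a⟩ ⟨j, b⟩
  simp [Matrix.conjTranspose_apply, Matrix.kroneckerMap_apply, mul_comm]

lemma kron_psd {S : Matrix d d ℂ} (hS : S.PosSemidef) (n : N) :
    (S ⊗ₖ Matrix.single n n (1 : ℂ)).PosSemidef := by
  obtain ⟨X, hX⟩ : ∃ X : Matrix d d ℂ, S = Xᴴ * X := by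
    open MatrixOrder in exact CStarAlgebra.nonneg_iff_eq_star_mul_self.mp hS.nonneg
  have he : Matrix.single n n (1 : ℂ)
      = (Matrix.single n n (1 : ℂ))ᴴ * Matrix.single n n (1 : ℂ) := by
    rw [stdBasis_conjT, Matrix.single_mul_single_same, mul_one]
  have : S ⊗ₖ Matrix.single n n (1 : ℂ)
      = (X ⊗ₖ Matrix.single n n (1 : ℂ))ᴴ * (X ⊗ₖ Matrix.single n n (1 : ℂ)) := by
    rw [kron_conjT, ← Matrix.mul_kronecker_mul, ← hX, stdBasis_conjT,
      Matrix.single_mul_single_same, mul_one]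
  rw [this]
  exact Matrix.posSemidef_conjTranspose_mul_self _

end Aux

/-- Proposition 2 (connection with the OLR approach). -/
theorem entropy_decrease_bounded_by_OLR_information_loss
    {d N : Type*} [Fintype d] [DecidableEq d] [Fintype N] [DecidableEq N]
    (P : N → Matrix d d ℂ)
    (hPherm : ∀ n, (P n).IsHermitian)
    (hPproj : ∀ n, P n * P n = P n)
    (hPorth : ∀ n m, n ≠ m → P n * P m = 0)
    (hPsum : ∑ n, P n = 1)
    (U : N → Matrix d d ℂ) (hU : ∀ n, U n * (U n)ᴴ = 1 ∧ (U n)ᴴ * U n = 1)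
    (ρ : Matrix d d ℂ) (hρ : IsDensity ρ)
    (p : N → ℝ) (hp : ∀ n, p n = ((ρ * P n).trace).re)
    (ρ₁₂ ρ₁₂' : Matrix (d × N) (d × N) ℂ)
    (hρ₁₂ : ρ₁₂ = ∑ n, (U n * P n * ρ * P n * (U n)ᴴ) ⊗ₖ Matrix.single n n 1)
    (hρ₁₂' : ρ₁₂' = ∑ n, (P n * ρ * P n) ⊗ₖ Matrix.single n n 1)
    (ρ₁ ρ₁' : Matrix d d ℂ) (ρ₂ : Matrix N N ℂ)
    (hρ₁ : ρ₁ = ∑ n, U n * P n * ρ * P n * (U n)ᴴ)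
    (hρ₁' : ρ₁' = ∑ n, P n * ρ * P n)
    (hρ₂ : ρ₂ = Matrix.diagonal (fun n => ((p n : ℝ) : ℂ)))
    (I I' : ℝ)
    (hI : I = vNE ρ₁ + vNE ρ₂ - vNE ρ₁₂)
    (hI' : I' = vNE ρ₁' + vNE ρ₂ - vNE ρ₁₂') :
    vNE ρ - vNE ρ₁ ≤ I' - I := by
  have hρpsd : ρ.PosSemidef := hρ.1
  -- Fact 1 : vNE ρ ≤ vNE ρ₁'  (pinching)
  have h1 : vNE ρ ≤ vNE ρ₁' := by
    refine vNE_le_channel ρ ρ₁' hρpsd P ?_ ?_ ?_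
    · calc ∑ n, P n * (P n)ᴴ = ∑ n, P n := by
            refine Finset.sum_congr rfl fun n _ => ?_
            rw [(hPherm n).eq, hPproj n]
        _ = 1 := hPsum
    · calc ∑ n, (P n)ᴴ * P n = ∑ n, P n := by
            refine Finset.sum_congr rfl fun n _ => ?_
            rw [(hPherm n).eq, hPproj n]
        _ = 1 := hPsum
    · rw [hρ₁']
      refine Finset.sum_congr rfl fun n _ => ?_
      rw [(hPherm n).eq]
  -- PSD of ρ₁₂ and ρ₁₂'
  have hterm_psd : ∀ n, (P n * ρ * P n).PosSemidef := by
    intro n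
    have := hρpsd.mul_mul_conjTranspose_same (P n)
    rwa [(hPherm n).eq] at this
  have hρ₁₂'psd : ρ₁₂'.PosSemidef := by
    rw [hρ₁₂']
    refine Finset.sum_induction _ _ (fun x y hx hy => hx.add hy) Matrix.PosSemidef.zero ?_
    intro n _
    exact kron_psd (hterm_psd n) n
  have hterm2_psd : ∀ n, (U n * P n * ρ * P n * (U n)ᴴ).PosSemidef := by
    intro n
    have := hρpsd.mul_mul_conjTranspose_same (U n * P n)
    have heq : U n * P n * ρ * (U n * P n)ᴴ = U n * P n * ρ * P n * (U n)ᴴ := by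
      rw [Matrix.conjTranspose_mul, (hPherm n).eq, Matrix.mul_assoc (U n * P n * ρ)]
    rwa [heq] at this
  have hρ₁₂psd : ρ₁₂.PosSemidef := by
    rw [hρ₁₂]
    refine Finset.sum_induction _ _ (fun x y hx hy => hx.add hy) Matrix.PosSemidef.zero ?_
    intro n _
    exact kron_psd (hterm2_psd n) n
  -- Kraus operators relating ρ₁₂ and ρ₁₂'
  set K : N → Matrix (d × N) (d × N) ℂ :=
    fun n => (U n) ⊗ₖ Matrix.single n n (1 : ℂ) with hKdef
  have hKK : ∑ n, K n * (K n)ᴴ = 1 := by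
    calc ∑ n, K n * (K n)ᴴ
        = ∑ n, (1 : Matrix d d ℂ) ⊗ₖ Matrix.single n n (1 : ℂ) := by
          refine Finset.sum_congr rfl fun n _ => ?_
          simp only [hKdef]
          rw [kron_conjT, stdBasis_conjT, ← Matrix.mul_kronecker_mul, (hU n).1,
            Matrix.single_mul_single_same, mul_one]
      _ = (1 : Matrix d d ℂ) ⊗ₖ ∑ n, Matrix.single n n (1 : ℂ) := by
          rw [kron_sum_right]
      _ = 1 := by rw [sum_stdBasis, Matrix.one_kronecker_one]
  have hKK' : ∑ n, (K n)ᴴ * K n = 1 := by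
    calc ∑ n, (K n)ᴴ * K n
        = ∑ n, (1 : Matrix d d ℂ) ⊗ₖ Matrix.single n n (1 : ℂ) := by
          refine Finset.sum_congr rfl fun n _ => ?_
          simp only [hKdef]
          rw [kron_conjT, stdBasis_conjT, ← Matrix.mul_kronecker_mul, (hU n).2,
            Matrix.single_mul_single_same, mul_one]
      _ = (1 : Matrix d d ℂ) ⊗ₖ ∑ n, Matrix.single n n (1 : ℂ) := by
          rw [kron_sum_right]
      _ = 1 := by rw [sum_stdBasis, Matrix.one_kronecker_one]
  -- ρ₁₂ = Σ K ρ₁₂' Kᴴ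
  have hforward : ρ₁₂ = ∑ n, K n * ρ₁₂' * (K n)ᴴ := by
    rw [hρ₁₂, hρ₁₂']
    refine Finset.sum_congr rfl fun n _ => ?_
    rw [Finset.mul_sum, Finset.sum_mul]
    rw [Finset.sum_eq_single n]
    · simp only [hKdef, kron_conjT, stdBasis_conjT, ← Matrix.mul_kronecker_mul,
        Matrix.single_mul_single_same, one_mul, mul_one, Matrix.mul_assoc]
    · intro m _ hmn
      simp only [hKdef, kron_conjT, stdBasis_conjT, ← Matrix.mul_kronecker_mul]
      rw [Matrix.single_mul_single_of_ne (h := hmn.symm), Matrix.zero_mul,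
        Matrix.kronecker_zero]
    · intro h; exact absurd (Finset.mem_univ n) h
  -- ρ₁₂' = Σ Kᴴ ρ₁₂ K
  have hbackward : ρ₁₂' = ∑ n, (K n)ᴴ * ρ₁₂ * ((K n)ᴴ)ᴴ := by
    rw [hρ₁₂, hρ₁₂']
    refine Finset.sum_congr rfl fun n _ => ?_
    rw [Finset.mul_sum, Finset.sum_mul]
    rw [Finset.sum_eq_single n]
    · simp only [Matrix.conjTranspose_conjTranspose, hKdef, kron_conjT, stdBasis_conjT,
        ← Matrix.mul_kronecker_mul, Matrix.single_mul_single_same, one_mul, mul_one,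
        Matrix.mul_assoc]
      have h2 : (U n)ᴴ * (U n * (P n * (ρ * (P n * ((U n)ᴴ * U n)))))
          = P n * (ρ * P n) := by
        rw [(hU n).2, Matrix.mul_one, ← Matrix.mul_assoc ((U n)ᴴ) (U n), (hU n).2, one_mul]
      rw [h2]
    · intro m _ hmn
      simp only [hKdef, Matrix.conjTranspose_conjTranspose, kron_conjT, stdBasis_conjT,
        ← Matrix.mul_kronecker_mul]
      rw [Matrix.single_mul_single_of_ne (h := hmn.symm), Matrix.zero_mul,
        Matrix.kronecker_zero]
    · intro h; exact absurd (Finset.mem_univ n) h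
  have h2 : vNE ρ₁₂' ≤ vNE ρ₁₂ :=
    vNE_le_channel ρ₁₂' ρ₁₂ hρ₁₂'psd K hKK hKK' hforward
  have h3 : vNE ρ₁₂ ≤ vNE ρ₁₂' := by
    refine vNE_le_channel ρ₁₂ ρ₁₂' hρ₁₂psd (fun n => (K n)ᴴ) ?_ ?_ hbackward
    · simpa only [Matrix.conjTranspose_conjTranspose] using hKK'
    · simpa only [Matrix.conjTranspose_conjTranspose] using hKK
  rw [hI, hI']
  linarith
end

section
/- Let H = ℂ²⊗ℂ² ≅ ℂ⁴ with orthonormal basis ψ₁,…,ψ₄, and consider the swap unitary V on H⊗H, V(Φ⊗Ψ) = Ψ⊗Φ, the ancilla initial state φ = ψ₄, and the two-outcome ancilla observable Q̃ = (|ψ₁⟩⟨ψ₁|⊗1 + |ψ₂⟩⟨ψ₂|⊗1, |ψ₃⟩⟨ψ₃|⊗1 + |ψ₄⟩⟨ψ₄|⊗1) (identifying ψ₁,ψ₂ with 'first qubit up'). For the maximally mixed initial state ρ = (1/4)·1, the post-measurement reduced state is ρ₁ = |φ⟩⟨φ|, so ΔS = S(ρ) − S(ρ₁) = log 4, while the Shannon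 entropy of the outcome distribution is H(ρ, F̃) = log 2. Hence ΔS > H(ρ, F̃). -/
open Matrix Kronecker ComplexOrder

noncomputable def ptraceK {dH dK : Type*} [Fintype dK]
    (M : Matrix (dH × dK) (dH × dK) ℂ) : Matrix dH dH ℂ :=
  Matrix.of fun a b => ∑ j, M (a, j) (b, j)

section Aux

lemma aux_eig_smul_one {d : Type*} [Fintype d] [DecidableEq d] (c : ℝ)
    (A : Matrix d d ℂ) (hA : A = ((c : ℂ)) • 1)
    (h : A.IsHermitian) (i : d) : h.eigenvalues i = c := by
  have key : star (IsHermitian.eigenvectorUnitary h : Matrix d d ℂ) * A *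
      (IsHermitian.eigenvectorUnitary h : Matrix d d ℂ) =
      Matrix.diagonal ((RCLike.ofReal : ℝ → ℂ) ∘ h.eigenvalues) := by
    have := h.conjStarAlgAut_star_eigenvectorUnitary
    rwa [Unitary.conjStarAlgAut_star_apply] at this
  have e1 := congrArg (fun M => star (IsHermitian.eigenvectorUnitary h : Matrix d d ℂ) * M *
      (IsHermitian.eigenvectorUnitary h : Matrix d d ℂ)) hA
  beta_reduce at e1
  rw [key, Matrix.mul_smul, Matrix.smul_mul, mul_one,
    Matrix.UnitaryGroup.star_mul_self _] at e1
  have := congrFun (congrFun e1 i) i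
  simp [Matrix.diagonal_apply_eq, Matrix.one_apply_eq] at this
  exact_mod_cast this

lemma aux_eig_idem {d : Type*} [Fintype d] [DecidableEq d] (A : Matrix d d ℂ)
    (h : A.IsHermitian) (hA2 : A * A = A) (i : d) :
    h.eigenvalues i = 0 ∨ h.eigenvalues i = 1 := by
  have key : star (IsHermitian.eigenvectorUnitary h : Matrix d d ℂ) * A *
      (IsHermitian.eigenvectorUnitary h : Matrix d d ℂ) =
      Matrix.diagonal ((RCLike.ofReal : ℝ → ℂ) ∘ h.eigenvalues) := by
    have := h.conjStarAlgAut_star_eigenvectorUnitary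
    rwa [Unitary.conjStarAlgAut_star_apply] at this
  have hU : (IsHermitian.eigenvectorUnitary h : Matrix d d ℂ) *
      (star (IsHermitian.eigenvectorUnitary h : Matrix d d ℂ)) = 1 := by
    exact (IsHermitian.eigenvectorUnitary h).2.2
  have hsq : Matrix.diagonal ((RCLike.ofReal : ℝ → ℂ) ∘ h.eigenvalues) *
      Matrix.diagonal ((RCLike.ofReal : ℝ → ℂ) ∘ h.eigenvalues) =
      Matrix.diagonal ((RCLike.ofReal : ℝ → ℂ) ∘ h.eigenvalues) := by
    rw [← key]
    calc (star (IsHermitian.eigenvectorUnitary h : Matrix d d ℂ) * A *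
          (IsHermitian.eigenvectorUnitary h : Matrix d d ℂ)) *
        (star (IsHermitian.eigenvectorUnitary h : Matrix d d ℂ) * A *
          (IsHermitian.eigenvectorUnitary h : Matrix d d ℂ))
        = star (IsHermitian.eigenvectorUnitary h : Matrix d d ℂ) * (A * A) *
          (IsHermitian.eigenvectorUnitary h : Matrix d d ℂ) := by
          rw [Matrix.mul_assoc, Matrix.mul_assoc, Matrix.mul_assoc]
          rw [← Matrix.mul_assoc (IsHermitian.eigenvectorUnitary h : Matrix d d ℂ), hU, one_mul,
            ← Matrix.mul_assoc, ← Matrix.mul_assoc, Matrix.mul_assoc _ A A]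
      _ = _ := by rw [hA2]
  rw [Matrix.diagonal_mul_diagonal] at hsq
  have h2 : ((h.eigenvalues i : ℂ)) * (h.eigenvalues i : ℂ) = (h.eigenvalues i : ℂ) := by
    simpa using congrFun (congrFun hsq i) i
  have h3 : h.eigenvalues i * h.eigenvalues i = h.eigenvalues i := by exact_mod_cast h2
  have h4 : h.eigenvalues i * (h.eigenvalues i - 1) = 0 := by ring_nf; linarith [h3]
  rcases mul_eq_zero.mp h4 with h0 | h1
  · left; exact h0
  · right; linarith

lemma aux_swap_conj (V : Matrix (Fin 4 × Fin 4) (Fin 4 × Fin 4) ℂ)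
    (hV : V = Matrix.of fun p q => if p.1 = q.2 ∧ p.2 = q.1 then 1 else 0)
    (M : Matrix (Fin 4 × Fin 4) (Fin 4 × Fin 4) ℂ) :
    V * M * Vᴴ = Matrix.of fun p q => M (p.2, p.1) (q.2, q.1) := by
  subst hV
  ext ⟨a, b⟩ ⟨c, d⟩
  simp [Matrix.mul_apply, Matrix.conjTranspose_apply, Fintype.sum_prod_type, ite_and,
    apply_ite, Finset.sum_ite_eq, Finset.sum_ite_eq']

lemma aux_ptraceK_kron {dH dK : Type*} [Fintype dK] [Fintype dH]
    (A : Matrix dH dH ℂ) (B : Matrix dK dK ℂ) :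
    ptraceK (A ⊗ₖ B) = B.trace • A := by
  ext a b
  simp [ptraceK, Matrix.trace, Matrix.diag, Finset.sum_mul, Finset.mul_sum, mul_comm]

end Aux

/-- The counterexample to the Szilard bound for non-pure instruments:
two-qubit erasure via the swap unitary, with a coarse-grained ancilla observable. -/
theorem counterexample_szilard_bound_nonpure
    (V : Matrix (Fin 4 × Fin 4) (Fin 4 × Fin 4) ℂ)
    (hV : V = Matrix.of fun p q => if p.1 = q.2 ∧ p.2 = q.1 then 1 else 0)
    (Pφ : Matrix (Fin 4) (Fin 4) ℂ) (hPφ : Pφ = Matrix.single 3 3 1)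
    (Q : Fin 2 → Matrix (Fin 4) (Fin 4) ℂ)
    (hQ0 : Q 0 = Matrix.diagonal (fun j => if j = 0 ∨ j = 1 then 1 else 0))
    (hQ1 : Q 1 = Matrix.diagonal (fun j => if j = 2 ∨ j = 3 then 1 else 0))
    (ρ : Matrix (Fin 4) (Fin 4) ℂ) (hρ : ρ = (1/4 : ℂ) • 1)
    (ρ₁ : Matrix (Fin 4) (Fin 4) ℂ)
    (hρ₁ : ρ₁ = ptraceK (∑ n, ((1 : Matrix (Fin 4) (Fin 4) ℂ) ⊗ₖ Q n) *
        (V * (ρ ⊗ₖ Pφ) * Vᴴ) * ((1 : Matrix (Fin 4) (Fin 4) ℂ) ⊗ₖ Q n)))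
    (p : Fin 2 → ℝ)
    (hp : ∀ n, p n = ((((1 : Matrix (Fin 4) (Fin 4) ℂ) ⊗ₖ Q n) *
        (V * (ρ ⊗ₖ Pφ) * Vᴴ) * ((1 : Matrix (Fin 4) (Fin 4) ℂ) ⊗ₖ Q n)).trace).re) :
    ρ₁ = Pφ ∧
      vNE ρ - vNE ρ₁ = Real.log 4 ∧
      ∑ n, Real.negMulLog (p n) = Real.log 2 ∧
      vNE ρ - vNE ρ₁ > ∑ n, Real.negMulLog (p n) := by
  -- Step 1: the conjugated state is Pφ ⊗ ρ
  have hswap : V * (ρ ⊗ₖ Pφ) * Vᴴ = Pφ ⊗ₖ ρ := by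
    rw [aux_swap_conj V hV]
    ext ⟨a, b⟩ ⟨c, d⟩
    simp [Matrix.kroneckerMap_apply, mul_comm]
  -- Step 2: each instrument term
  have hQsq : ∀ n, Q n * Q n = Q n := by
    intro n
    match n with
    | 0 =>
      rw [hQ0, Matrix.diagonal_mul_diagonal]
      exact congrArg Matrix.diagonal (by
        funext j; by_cases hj : (j = 0 ∨ j = 1) <;> simp [hj])
    | 1 =>
      rw [hQ1, Matrix.diagonal_mul_diagonal]
      exact congrArg Matrix.diagonal (by
        funext j; by_cases hj : (j = 2 ∨ j = 3) <;> simp [hj])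
  have hterm : ∀ n, ((1 : Matrix (Fin 4) (Fin 4) ℂ) ⊗ₖ Q n) *
      (V * (ρ ⊗ₖ Pφ) * Vᴴ) * ((1 : Matrix (Fin 4) (Fin 4) ℂ) ⊗ₖ Q n)
      = Pφ ⊗ₖ ((1/4 : ℂ) • Q n) := by
    intro n
    rw [hswap, ← Matrix.mul_kronecker_mul, ← Matrix.mul_kronecker_mul, one_mul, mul_one,
      hρ, Matrix.mul_smul, Matrix.smul_mul, mul_one, hQsq n]
  -- Step 3: the sum
  have hQsum : Q 0 + Q 1 = 1 := by
    rw [hQ0, hQ1, Matrix.diagonal_add]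
    ext j k
    fin_cases j <;> fin_cases k <;> simp [Matrix.one_apply, Matrix.diagonal_apply]
  have hsum : (∑ n, ((1 : Matrix (Fin 4) (Fin 4) ℂ) ⊗ₖ Q n) *
      (V * (ρ ⊗ₖ Pφ) * Vᴴ) * ((1 : Matrix (Fin 4) (Fin 4) ℂ) ⊗ₖ Q n)) = Pφ ⊗ₖ ρ := by
    rw [Fin.sum_univ_two, hterm 0, hterm 1, ← Matrix.kronecker_add, ← smul_add, hQsum, ← hρ]
  -- Step 4: ρ₁ = Pφ
  have hρtr : ρ.trace = 1 := by
    rw [hρ]; simp [Matrix.trace_smul]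
  have h1 : ρ₁ = Pφ := by
    rw [hρ₁, hsum, aux_ptraceK_kron, hρtr, one_smul]
  -- Hermitian facts
  have hρH : ρ.IsHermitian := by
    rw [hρ]
    unfold Matrix.IsHermitian
    rw [Matrix.conjTranspose_smul, Matrix.conjTranspose_one]
    norm_num
  have hPφH : Pφ.IsHermitian := by
    rw [hPφ]
    unfold Matrix.IsHermitian
    ext i j
    fin_cases i <;> fin_cases j <;>
      simp [Matrix.conjTranspose_apply, Matrix.single]
  have hPφ2 : Pφ * Pφ = Pφ := by
    rw [hPφ, Matrix.single_mul_single_same, mul_one]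
  -- entropies
  have hρc : ρ = (((1/4 : ℝ) : ℂ)) • 1 := by rw [hρ]; norm_num
  have hv1 : vNE ρ = Real.log 4 := by
    rw [vNE, dif_pos hρH]
    have he : ∀ i, hρH.eigenvalues i = (1/4 : ℝ) := fun i =>
      aux_eig_smul_one (1/4) ρ hρc hρH i
    simp only [he]
    rw [Finset.sum_const, Finset.card_univ, Fintype.card_fin, nsmul_eq_mul,
      Real.negMulLog, one_div, Real.log_inv]
    push_cast
    ring
  have hv2 : vNE ρ₁ = 0 := by
    rw [h1, vNE, dif_pos hPφH]
    apply Finset.sum_eq_zero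
    intro i _
    rcases aux_eig_idem Pφ hPφH hPφ2 i with h0 | h0 <;>
      simp [h0, Real.negMulLog_zero, Real.negMulLog_one]
  -- probabilities
  have hQtr : ∀ n, (Q n).trace = 2 := by
    intro n
    match n with
    | 0 =>
      rw [hQ0, Matrix.trace_diagonal, Fin.sum_univ_four]
      norm_num [show ¬((2:Fin 4) = 0 ∨ (2:Fin 4) = 1) from by decide,
        show ¬((3:Fin 4) = 0 ∨ (3:Fin 4) = 1) from by decide]
    | 1 =>
      rw [hQ1, Matrix.trace_diagonal, Fin.sum_univ_four]
      norm_num [show ¬((0:Fin 4) = 2 ∨ (0:Fin 4) = 3) from by decide,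
        show ¬((1:Fin 4) = 2 ∨ (1:Fin 4) = 3) from by decide]
  have hPφtr : Pφ.trace = 1 := by
    rw [hPφ, Matrix.trace]
    simp [Matrix.diag, Matrix.single, Fin.sum_univ_four]
  have hpn : ∀ n, p n = 1/2 := by
    intro n
    rw [hp n, hterm n, Matrix.trace_kronecker, hPφtr, Matrix.trace_smul, hQtr n]
    norm_num
  have hshannon : ∑ n, Real.negMulLog (p n) = Real.log 2 := by
    rw [Fin.sum_univ_two, hpn 0, hpn 1, Real.negMulLog, one_div, Real.log_inv]
    ring
  refine ⟨h1, ?_, hshannon, ?_⟩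
  · rw [hv1, hv2]; ring
  · rw [hv1, hv2, hshannon]
    have : Real.log 2 < Real.log 4 := Real.log_lt_log (by norm_num) (by norm_num)
    linarith
end

section
/- For the imperfect-erasure channel Φ with Kraus operators A₁ = √(5/14)·1, A₂ = diag(−1/√14, 3/√14), A₃ = [[0,0],[2/√7,0]], and the POVM F = (diag(3/7,1), diag(4/7,0)), every diagonal state ρ(p) = diag(p, 1−p), p ∈ [0,1], satisfies the Szilard bound S(ρ(p)) − S(Φ(ρ(p))) ≤ H(ρ(p), F), where H(ρ,F) is the Shannon entropy of the distribution (Tr(ρF₀), Tr(ρF₁)) = (1 − 4p/7, 4p/7). -/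
open Matrix

noncomputable def A₁ : Matrix (Fin 2) (Fin 2) ℂ := ((Real.sqrt (5/14) : ℝ) : ℂ) • 1
noncomputable def A₂ : Matrix (Fin 2) (Fin 2) ℂ :=
  !![((-(1 / Real.sqrt 14) : ℝ) : ℂ), 0; 0, ((3 / Real.sqrt 14 : ℝ) : ℂ)]
noncomputable def A₃ : Matrix (Fin 2) (Fin 2) ℂ :=
  !![0, 0; ((2 / Real.sqrt 7 : ℝ) : ℂ), 0]

noncomputable def Φ (ρ : Matrix (Fin 2) (Fin 2) ℂ) : Matrix (Fin 2) (Fin 2) ℂ :=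
  A₁ * ρ * A₁ᴴ + A₂ * ρ * A₂ᴴ + A₃ * ρ * A₃ᴴ

noncomputable def F₀ : Matrix (Fin 2) (Fin 2) ℂ := !![(3/7 : ℂ), 0; 0, 1]
noncomputable def F₁ : Matrix (Fin 2) (Fin 2) ℂ := !![(4/7 : ℂ), 0; 0, 0]

lemma trace_eq_sum_eigs {A : Matrix (Fin 2) (Fin 2) ℂ} (hA : A.IsHermitian) :
    A.trace = ∑ i, (hA.eigenvalues i : ℂ) := by
  nth_rewrite 1 [hA.spectral_theorem]
  rw [Unitary.conjStarAlgAut_apply, Matrix.trace_mul_cycle]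
  rw [Unitary.coe_star_mul_self]
  simp [Matrix.trace_diagonal]

lemma vNE_diag (a b : ℝ) :
    vNE (Matrix.diagonal ![(a : ℂ), (b : ℂ)]) = Real.negMulLog a + Real.negMulLog b := by
  classical
  have hherm : (Matrix.diagonal ![(a : ℂ), (b : ℂ)]).IsHermitian := by
    refine Matrix.isHermitian_diagonal_iff.mpr ?_
    intro i
    fin_cases i <;>
      exact Complex.conj_ofReal _
  rw [vNE, dif_pos hherm]
  set e := hherm.eigenvalues with he
  have htr : (Matrix.diagonal ![(a : ℂ), (b : ℂ)]).trace = ∑ i, (e i : ℂ) :=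
    trace_eq_sum_eigs hherm
  have hdet : (Matrix.diagonal ![(a : ℂ), (b : ℂ)]).det = ∏ i, (e i : ℂ) :=
    hherm.det_eq_prod_eigenvalues
  rw [Matrix.trace_diagonal, Fin.sum_univ_two, Fin.sum_univ_two] at htr
  rw [Matrix.det_diagonal, Fin.prod_univ_two, Fin.prod_univ_two] at hdet
  simp only [Matrix.cons_val_zero, Matrix.cons_val_one, Matrix.head_cons] at htr hdet
  have hsum : e 0 + e 1 = a + b := by exact_mod_cast htr.symm
  have hprod : e 0 * e 1 = a * b := by exact_mod_cast hdet.symm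
  have hcase : (e 0 = a ∧ e 1 = b) ∨ (e 0 = b ∧ e 1 = a) := by
    have h1 : (e 0 - a) * (e 0 - b) = 0 := by linear_combination (e 0) * hsum - hprod
    rcases mul_eq_zero.mp h1 with h | h
    · left
      have h0 : e 0 = a := by linarith
      exact ⟨h0, by linarith⟩
    · right
      have h0 : e 0 = b := by linarith
      exact ⟨h0, by linarith⟩
  rw [Fin.sum_univ_two]
  rcases hcase with ⟨h0, h1⟩ | ⟨h0, h1⟩ <;> rw [h0, h1]
  ring

lemma Φ_diag (p : ℝ) :
    Φ (Matrix.diagonal ![(p : ℂ), ((1 - p : ℝ) : ℂ)]) =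
      Matrix.diagonal ![((3 * p / 7 : ℝ) : ℂ), ((1 - 3 * p / 7 : ℝ) : ℂ)] := by
  have h14 : (Complex.ofReal (Real.sqrt 14)) * (Complex.ofReal (Real.sqrt 14)) = 14 := by
    rw [← Complex.ofReal_mul, Real.mul_self_sqrt (by norm_num)]; norm_num
  have h7 : (Complex.ofReal (Real.sqrt 7)) * (Complex.ofReal (Real.sqrt 7)) = 7 := by
    rw [← Complex.ofReal_mul, Real.mul_self_sqrt (by norm_num)]; norm_num
  have h514 : (Complex.ofReal (Real.sqrt (5/14))) * (Complex.ofReal (Real.sqrt (5/14))) = 5/14 := by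
    rw [← Complex.ofReal_mul, Real.mul_self_sqrt (by norm_num)]; norm_num
  have h14' : (Complex.ofReal (Real.sqrt 14)) ≠ 0 := by
    simpa using Real.sqrt_pos.mpr (by norm_num)
  have h7' : (Complex.ofReal (Real.sqrt 7)) ≠ 0 := by
    simpa using Real.sqrt_pos.mpr (by norm_num)
  have h5sq : (Complex.ofReal (Real.sqrt 5))^2 = 5 := by
    rw [← Complex.ofReal_pow, Real.sq_sqrt (by norm_num)]; norm_num
  have h7sq : (Complex.ofReal (Real.sqrt 7))^2 = 7 := by
    rw [← Complex.ofReal_pow, Real.sq_sqrt (by norm_num)]; norm_num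
  have h14sq : (Complex.ofReal (Real.sqrt 14))^2 = 14 := by
    rw [← Complex.ofReal_pow, Real.sq_sqrt (by norm_num)]; norm_num
  ext i j
  fin_cases i <;> fin_cases j <;>
    simp [Φ, A₁, A₂, A₃, Matrix.mul_apply, Fin.sum_univ_two, Matrix.conjTranspose_apply,
      Matrix.diagonal, Complex.conj_ofReal, Matrix.vecHead, Matrix.vecTail, Matrix.vecMul,
      dotProduct, Matrix.one_apply]
  · field_simp
    ring_nf
    simp only [h5sq, h7sq, h14sq, map_ofNat]
    ring
  · field_simp
    ring_nf
    simp only [h5sq, h7sq, h14sq, map_ofNat]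
    ring

lemma negMulLog_split {x : ℝ} (hx : 0 ≤ x) {w : ℝ} (hw0 : 0 ≤ w) (hw1 : w ≤ 1) :
    w * Real.negMulLog x ≤ Real.negMulLog (w * x) := by
  have := Real.concaveOn_negMulLog.2 (Set.mem_Ici.mpr hx) (Set.mem_Ici.mpr (le_refl (0:ℝ)))
    hw0 (by linarith : (0:ℝ) ≤ 1 - w) (by ring)
  simpa [smul_eq_mul] using this

lemma negMulLog_split' {x : ℝ} (hx : 0 ≤ x) {w : ℝ} (hw0 : 0 ≤ w) (hw1 : w ≤ 1) :
    w * Real.negMulLog x ≤ Real.negMulLog (w * x + (1 - w)) := by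
  have := Real.concaveOn_negMulLog.2 (Set.mem_Ici.mpr hx)
    (Set.mem_Ici.mpr (by norm_num : (0:ℝ) ≤ 1))
    hw0 (by linarith : (0:ℝ) ≤ 1 - w) (by ring)
  simpa [smul_eq_mul, add_comm] using this

theorem imperfect_erasure_satisfies_szilard_bound
    (p : ℝ) (hp0 : 0 ≤ p) (hp1 : p ≤ 1)
    (ρ : Matrix (Fin 2) (Fin 2) ℂ)
    (hρ : ρ = Matrix.diagonal ![(p : ℂ), ((1 - p : ℝ) : ℂ)]) :
    vNE ρ - vNE (Φ ρ) ≤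
      Real.negMulLog (((ρ * F₀).trace).re) + Real.negMulLog (((ρ * F₁).trace).re) := by
  subst hρ
  rw [Φ_diag, vNE_diag, vNE_diag]
  have htr0 : (((Matrix.diagonal ![(p : ℂ), ((1 - p : ℝ) : ℂ)]) * F₀).trace).re
      = 1 - 4 * p / 7 := by
    simp [F₀, Matrix.trace, Matrix.mul_apply, Fin.sum_univ_two, Matrix.diagonal,
      Matrix.diag, Matrix.vecHead, Matrix.vecTail]
    ring
  have htr1 : (((Matrix.diagonal ![(p : ℂ), ((1 - p : ℝ) : ℂ)]) * F₁).trace).re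
      = 4 * p / 7 := by
    simp [F₁, Matrix.trace, Matrix.mul_apply, Fin.sum_univ_two, Matrix.diagonal,
      Matrix.diag, Matrix.vecHead, Matrix.vecTail]
    ring
  rw [htr0, htr1]
  have h1 : (3/7 : ℝ) * Real.negMulLog p ≤ Real.negMulLog (3 * p / 7) := by
    have := negMulLog_split hp0 (by norm_num : (0:ℝ) ≤ 3/7) (by norm_num)
    convert this using 2
    ring
  have h2 : (4/7 : ℝ) * Real.negMulLog p ≤ Real.negMulLog (4 * p / 7) := by
    have := negMulLog_split hp0 (by norm_num : (0:ℝ) ≤ 4/7) (by norm_num)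
    convert this using 2
    ring
  have h3 : (3/7 : ℝ) * Real.negMulLog (1 - p) ≤ Real.negMulLog (1 - 3 * p / 7) := by
    have := negMulLog_split' (by linarith : (0:ℝ) ≤ 1 - p)
      (by norm_num : (0:ℝ) ≤ 3/7) (by norm_num)
    convert this using 2
    ring
  have h4 : (4/7 : ℝ) * Real.negMulLog (1 - p) ≤ Real.negMulLog (1 - 4 * p / 7) := by
    have := negMulLog_split' (by linarith : (0:ℝ) ≤ 1 - p)
      (by norm_num : (0:ℝ) ≤ 4/7) (by norm_num)
    convert this using 2
    ring
  linarith
end
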